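/- Let A be an n×n complex matrix of index k, let m ≥ 1 be an integer, and let X be an n×n complex matrix. The following are equivalent: (a) X = A^{#_m}; (b) AX = (A⊕)^m A^m P_{A^m} and R(X) = R(A^k); (c) AX = (A⊕)^m A^m P_{A^m} and AX^2 = X. -/
import Mathlib


open Matrix

/-- `X` is the Moore–Penrose inverse of `A` (four Penrose equations). -/
def MoorePenroseOf {n : ℕ} (A X : Matrix (Fin n) (Fin n) ℂ) : Prop :=
  A * X * A = A ∧ X * A * X = X ∧ (A * X)ᴴ = A * X ∧ (X * A)ᴴ = X * A

/-- Column space of a square complex matrix. -/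
noncomputable def colSpace {n : ℕ} (A : Matrix (Fin n) (Fin n) ℂ) : Submodule ℂ (Fin n → ℂ) :=
  LinearMap.range A.mulVecLin

/-- Null space of a square complex matrix. -/
noncomputable def nullSpace {n : ℕ} (A : Matrix (Fin n) (Fin n) ℂ) : Submodule ℂ (Fin n → ℂ) :=
  LinearMap.ker A.mulVecLin

/-- `k` is the index of `A`: the smallest nonnegative integer with
`rank(A^k) = rank(A^(k+1))`. -/
def HasIndex {n : ℕ} (A : Matrix (Fin n) (Fin n) ℂ) (k : ℕ) : Prop :=
  (A ^ k).rank = (A ^ (k + 1)).rank ∧ ∀ j < k, (A ^ j).rank ≠ (A ^ (j + 1)).rank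

/-- `X` is the core-EP inverse of `A` (where `k = Ind(A)`): `XAX = X` and
`R(X) = R(Xᴴ) = R(A^k)`. -/
def IsCoreEP {n : ℕ} (A X : Matrix (Fin n) (Fin n) ℂ) (k : ℕ) : Prop :=
  X * A * X = X ∧ colSpace X = colSpace (A ^ k) ∧ colSpace Xᴴ = colSpace (A ^ k)

namespace Stmt14Aux

variable {n : ℕ}

lemma mem_colSpace {M : Matrix (Fin n) (Fin n) ℂ} (u : Fin n → ℂ) : M *ᵥ u ∈ colSpace M :=
  ⟨u, rfl⟩

lemma colSpace_mul (M N : Matrix (Fin n) (Fin n) ℂ) :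
    colSpace (M * N) = (colSpace N).map M.mulVecLin := by
  unfold colSpace
  rw [Matrix.mulVecLin_mul, LinearMap.range_comp]

lemma colSpace_mul_le (M N : Matrix (Fin n) (Fin n) ℂ) :
    colSpace (M * N) ≤ colSpace M := by
  rintro v ⟨u, rfl⟩
  exact ⟨N *ᵥ u, by simp [Matrix.mulVecLin_apply, Matrix.mulVec_mulVec]⟩

lemma fix_of_mul_eq {M C : Matrix (Fin n) (Fin n) ℂ} (h : M * C = C) :
    ∀ v ∈ colSpace C, M *ᵥ v = v := by
  rintro v ⟨u, rfl⟩
  simp only [Matrix.mulVecLin_apply, Matrix.mulVec_mulVec, h]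

lemma mul_eq_of_fix {M Y : Matrix (Fin n) (Fin n) ℂ}
    (h : ∀ v ∈ colSpace Y, M *ᵥ v = v) : M * Y = Y := by
  ext i j
  have h1 := h (Y *ᵥ Pi.single j 1) (mem_colSpace _)
  have h2 : (M * Y) *ᵥ Pi.single j 1 = Y *ᵥ Pi.single j 1 := by
    rw [← Matrix.mulVec_mulVec, h1]
  have := congr_fun h2 i
  simpa [Matrix.mulVec_single_one] using this

end Stmt14Aux

open Stmt14Aux in
/-- equivalence of (a) `X = A^{#_m}`;
(b) `AX = (A⊕)^m A^m P_{A^m}` and `R(X) = R(A^k)`;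
(c) `AX = (A⊕)^m A^m P_{A^m}` and `AX² = X`. -/
theorem stmt_14 {n k m : ℕ} (hm : 1 ≤ m)
    (A CEP AmDag X : Matrix (Fin n) (Fin n) ℂ)
    (hInd : HasIndex A k)
    (hCEP : IsCoreEP A CEP k)
    (hMP : MoorePenroseOf (A ^ m) AmDag) :
    (X = CEP ^ (m + 1) * A ^ m * (A ^ m * AmDag) ↔
      (A * X = CEP ^ m * A ^ m * (A ^ m * AmDag) ∧
       colSpace X = colSpace (A ^ k))) ∧
    (X = CEP ^ (m + 1) * A ^ m * (A ^ m * AmDag) ↔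
      (A * X = CEP ^ m * A ^ m * (A ^ m * AmDag) ∧
       A * X ^ 2 = X)) := by
  obtain ⟨hr1, -⟩ := hInd
  obtain ⟨hxax, hrC, -⟩ := hCEP
  obtain ⟨hp1, -, -, -⟩ := hMP
  set P : Matrix (Fin n) (Fin n) ℂ := A ^ m * AmDag with hPdef
  -- range of A^(k+1) equals range of A^k
  have hle1 : colSpace (A ^ (k + 1)) ≤ colSpace (A ^ k) := by
    rw [pow_succ]; exact colSpace_mul_le _ _
  have hAk1 : colSpace (A ^ (k + 1)) = colSpace (A ^ k) :=
    Submodule.eq_of_le_of_finrank_le hle1 (le_of_eq hr1)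
  -- ranges stabilize from k on
  have hstab : ∀ d, colSpace (A ^ (k + d)) = colSpace (A ^ k) := by
    intro d
    induction d with
    | zero => rfl
    | succ d ih =>
      calc colSpace (A ^ (k + (d + 1)))
          = (colSpace (A ^ (k + d))).map A.mulVecLin := by
            rw [show k + (d + 1) = (k + d) + 1 from rfl, pow_succ', colSpace_mul]
        _ = (colSpace (A ^ k)).map A.mulVecLin := by rw [ih]
        _ = colSpace (A ^ (k + 1)) := by rw [← colSpace_mul, ← pow_succ']
        _ = colSpace (A ^ k) := hAk1
  -- antitonicity of ranges of powers
  have hmono : ∀ i j : ℕ, i ≤ j → colSpace (A ^ j) ≤ colSpace (A ^ i) := by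
    intro i j hij
    obtain ⟨d, rfl⟩ := Nat.exists_eq_add_of_le hij
    rw [pow_add]; exact colSpace_mul_le _ _
  have hkle : ∀ j, colSpace (A ^ k) ≤ colSpace (A ^ j) := by
    intro j
    rcases le_total j k with h | h
    · exact hmono j k h
    · obtain ⟨d, rfl⟩ := Nat.exists_eq_add_of_le h
      rw [hstab d]
  -- CEP * A acts as the identity on the range of CEP
  have hfix : ∀ v ∈ colSpace CEP, (CEP * A) *ᵥ v = v := by
    intro v hv
    exact fix_of_mul_eq hxax v hv
  -- CEP * A^(j+1) = A^j for j ≥ k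
  have hCA : ∀ j, k ≤ j → CEP * A ^ (j + 1) = A ^ j := by
    intro j hj
    have hcol : colSpace (A ^ j) = colSpace CEP := by
      obtain ⟨d, rfl⟩ := Nat.exists_eq_add_of_le hj
      rw [hstab d, hrC]
    have h1 : (CEP * A) * A ^ j = A ^ j :=
      mul_eq_of_fix fun v hv => hfix v (hcol ▸ hv)
    rw [pow_succ', ← mul_assoc]
    exact h1
  -- A * CEP * CEP = CEP
  have hQcol : colSpace (A * CEP) = colSpace (A ^ k) := by
    rw [colSpace_mul, hrC, ← colSpace_mul, ← pow_succ', hAk1]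
  have hQidem : (A * CEP) * (A * CEP) = A * CEP := by
    rw [mul_assoc A CEP (A * CEP), ← mul_assoc CEP A CEP, hxax]
  have hACC : A * CEP * CEP = CEP :=
    mul_eq_of_fix fun v hv =>
      fix_of_mul_eq hQidem v (by rw [hQcol, ← hrC]; exact hv)
  -- A * CEP^(j+1) = CEP^j for j ≥ 1
  have hACpow : ∀ j, 1 ≤ j → A * CEP ^ (j + 1) = CEP ^ j := by
    intro j hj
    obtain ⟨i, rfl⟩ : ∃ i, j = i + 1 := ⟨j - 1, by omega⟩
    rw [pow_succ', pow_succ', ← mul_assoc, ← mul_assoc, hACC]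
  -- A^j * CEP^(j+1) = CEP
  have hAmC : ∀ j, A ^ j * CEP ^ (j + 1) = CEP := by
    intro j
    induction j with
    | zero => simp
    | succ j ih =>
      rw [pow_succ, mul_assoc, hACpow (j + 1) (by omega), ih]
  -- CEP^j * A^(k+j) = A^k
  have hCk : ∀ j, CEP ^ j * A ^ (k + j) = A ^ k := by
    intro j
    induction j with
    | zero => simp
    | succ j ih =>
      show CEP ^ (j + 1) * A ^ ((k + j) + 1) = A ^ k
      rw [pow_succ, mul_assoc, hCA (k + j) (Nat.le_add_right k j), ih]
  -- facts about the projector P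
  have hPfixAm : ∀ v ∈ colSpace (A ^ m), P *ᵥ v = v := fix_of_mul_eq hp1
  have hCpow_le : colSpace (CEP ^ (m + 1)) ≤ colSpace CEP := by
    rw [pow_succ']; exact colSpace_mul_le _ _
  have hPCpow : P * CEP ^ (m + 1) = CEP ^ (m + 1) :=
    mul_eq_of_fix fun v hv => hPfixAm v (hkle m (hrC ▸ hCpow_le hv))
  have hPA : P * A ^ (k + m + 1) = A ^ (k + m + 1) :=
    mul_eq_of_fix fun v hv => hPfixAm v (hmono m (k + m + 1) (by omega) hv)
  -- A * W = V
  have hAW : A * (CEP ^ (m + 1) * A ^ m * P) = CEP ^ m * A ^ m * P := by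
    rw [← mul_assoc A (CEP ^ (m + 1) * A ^ m) P, ← mul_assoc A (CEP ^ (m + 1)) (A ^ m),
      hACpow m hm]
  -- W * A^(k+m+1) = A^(k+m)
  have hWA : (CEP ^ (m + 1) * A ^ m * P) * A ^ (k + m + 1) = A ^ (k + m) := by
    calc (CEP ^ (m + 1) * A ^ m * P) * A ^ (k + m + 1)
        = CEP ^ (m + 1) * A ^ m * (P * A ^ (k + m + 1)) := by
          rw [mul_assoc]
      _ = CEP ^ (m + 1) * A ^ m * A ^ (k + m + 1) := by rw [hPA]
      _ = CEP ^ (m + 1) * (A ^ (k + (m + 1)) * A ^ m) := by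
          rw [mul_assoc]; congr 1
          rw [← pow_add, ← pow_add]; congr 1; omega
      _ = CEP ^ (m + 1) * A ^ (k + (m + 1)) * A ^ m := by rw [mul_assoc]
      _ = A ^ k * A ^ m := by rw [hCk (m + 1)]
      _ = A ^ (k + m) := by rw [← pow_add]
  -- range of W is range of A^k
  have hWrange : colSpace (CEP ^ (m + 1) * A ^ m * P) = colSpace (A ^ k) := by
    apply le_antisymm
    · calc colSpace (CEP ^ (m + 1) * A ^ m * P)
          ≤ colSpace (CEP ^ (m + 1)) := by
            rw [mul_assoc]; exact colSpace_mul_le _ _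
        _ ≤ colSpace CEP := hCpow_le
        _ = colSpace (A ^ k) := hrC
    · calc colSpace (A ^ k) = colSpace (A ^ (k + m)) := (hstab m).symm
        _ = colSpace ((CEP ^ (m + 1) * A ^ m * P) * A ^ (k + m + 1)) := by rw [hWA]
        _ ≤ colSpace (CEP ^ (m + 1) * A ^ m * P) := colSpace_mul_le _ _
  -- V * W = W
  have hVW : (CEP ^ m * A ^ m * P) * (CEP ^ (m + 1) * A ^ m * P)
      = CEP ^ (m + 1) * A ^ m * P := by
    simp only [mul_assoc]
    rw [← mul_assoc P (CEP ^ (m + 1)), hPCpow, ← mul_assoc (A ^ m) (CEP ^ (m + 1)),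
      hAmC m, ← mul_assoc (CEP ^ m) CEP, ← pow_succ]
  -- range of CEP^m is inside range of CEP
  have hCm_le : colSpace (CEP ^ m) ≤ colSpace CEP := by
    obtain ⟨i, hi⟩ : ∃ i, m = i + 1 := ⟨m - 1, by omega⟩
    rw [hi, pow_succ']; exact colSpace_mul_le _ _
  constructor
  · constructor
    · rintro rfl
      exact ⟨hAW, hWrange⟩
    · rintro ⟨h1, h2⟩
      have hfixX : CEP * A * X = X :=
        mul_eq_of_fix fun v hv => hfix v (by rw [hrC, ← h2]; exact hv)
      calc X = CEP * A * X := hfixX.symm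
        _ = CEP * (CEP ^ m * A ^ m * P) := by rw [mul_assoc, h1]
        _ = CEP ^ (m + 1) * A ^ m * P := by
            rw [← mul_assoc CEP (CEP ^ m * A ^ m) P, ← mul_assoc CEP (CEP ^ m) (A ^ m),
              ← pow_succ']
  · constructor
    · rintro rfl
      refine ⟨hAW, ?_⟩
      rw [pow_two, ← mul_assoc, hAW]
      exact hVW
    · rintro ⟨h1, h2⟩
      have hXeq : CEP ^ m * A ^ m * P * X = X := by
        rw [← h1, mul_assoc, ← pow_two, h2]
      have hXcol : colSpace X ≤ colSpace CEP := by
        conv_lhs => rw [← hXeq]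
        calc colSpace (CEP ^ m * A ^ m * P * X)
            ≤ colSpace (CEP ^ m) := by
              simp only [mul_assoc]; exact colSpace_mul_le _ _
          _ ≤ colSpace CEP := hCm_le
      have hfixX : CEP * A * X = X :=
        mul_eq_of_fix fun v hv => hfix v (hXcol hv)
      calc X = CEP * A * X := hfixX.symm
        _ = CEP * (CEP ^ m * A ^ m * P) := by rw [mul_assoc, h1]
        _ = CEP ^ (m + 1) * A ^ m * P := by
            rw [← mul_assoc CEP (CEP ^ m * A ^ m) P, ← mul_assoc CEP (CEP ^ m) (A ^ m),
              ← pow_succ']
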